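/- Fix n ≥ 1 and set θ := π / (2 * n) and ε := (Real.cos θ)^2. Let R : Matrix (Fin 2) (Fin 2) ℂ be the rotation matrix with real entries !![cos θ, -sin θ; sin θ, cos θ], let e₀ := ![1, 0], φ_i := (R^i).mulVec e₀, and Q_i := vecMulVec φ_i (star φ_i). Define ρ_0 := vecMulVec e₀ (star e₀) and ρ_{i+1} := Q_{i+1} * ρ_i * Q_{i+1} + (1 - Q_{i+1}) * ρ_i * (1 - Q_{i+1}) for 0 ≤ i < n (the state after i+1 projective Zeno measurements). Let S : Matrix ((Fin 2) × (Fin 2)) ((Fin 2) × (Fin 2)) ℂ be the swap operator S (x,y) (x',y') = if x = y' ∧ y = x' then 1 else 0, and Eq := (1/2 : ℂ) • (1 + S). Then there exists a separable positive semidefinite ρ' : Matrix ((Fin 2) × (Fin 2)) ((Fin 2) × (Fin 2)) ℂ such that tr₂(ρ') = vecMulVec φ_n (star φ_n), tr₁(ρ') = ρ_n, and ε^n ≤ (Matrix.trace (Eq * ρ')).re. -/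

import Mathlib

open Matrix Kronecker ComplexOrder

noncomputable section

/-- Partial trace over the second factor: `tr₂(ρ) i i' = ∑ j, ρ (i,j) (i',j)`. -/
def trB {I J : Type*} [Fintype J] (ρ : Matrix (I × J) (I × J) ℂ) : Matrix I I ℂ :=
  Matrix.of fun i i' => ∑ j, ρ (i, j) (i', j)

/-- Partial trace over the first factor: `tr₁(ρ) j j' = ∑ i, ρ (i,j) (i,j')`. -/
def trA {I J : Type*} [Fintype I] (ρ : Matrix (I × J) (I × J) ℂ) : Matrix J J ℂ :=
  Matrix.of fun j j' => ∑ i, ρ (i, j) (i, j')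

/-- `ρ` is separable iff it is a finite sum of Kronecker products of
positive semidefinite matrices. -/
def Separable {I J : Type*} [Fintype I] [Fintype J]
    (ρ : Matrix (I × J) (I × J) ℂ) : Prop :=
  ∃ (n : ℕ) (σ : Fin n → Matrix I I ℂ) (τ : Fin n → Matrix J J ℂ),
    (∀ k, (σ k).PosSemidef) ∧ (∀ k, (τ k).PosSemidef) ∧ ρ = ∑ k, σ k ⊗ₖ τ k

/-- The expectation-qRHL judgment `qRHL(A, E1, E2, B)`. -/
def qRHL {I J : Type*} [Fintype I] [Fintype J]
    (A : Matrix (I × J) (I × J) ℂ)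
    (E1 : Matrix I I ℂ → Matrix I I ℂ) (E2 : Matrix J J ℂ → Matrix J J ℂ)
    (B : Matrix (I × J) (I × J) ℂ) : Prop :=
  ∀ ρ : Matrix (I × J) (I × J) ℂ, ρ.PosSemidef → Separable ρ →
    ∃ ρ' : Matrix (I × J) (I × J) ℂ, ρ'.PosSemidef ∧ Separable ρ' ∧
      trB ρ' = E1 (trB ρ) ∧ trA ρ' = E2 (trA ρ) ∧
      (Matrix.trace (A * ρ)).re ≤ (Matrix.trace (B * ρ')).re

set_option linter.unusedSectionVars false

section ZenoHelpers

variable {m : Type*} [Fintype m] [DecidableEq m]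

private lemma vmv_mul_vmv (a b c d : m → ℂ) :
    vecMulVec a b * vecMulVec c d = (b ⬝ᵥ c) • vecMulVec a d := by
  ext i j
  simp only [mul_apply, vecMulVec_apply, Matrix.smul_apply, dotProduct, smul_eq_mul,
    Finset.sum_mul]
  exact Finset.sum_congr rfl fun k _ => by ring

private lemma vmv_conjT (v : m → ℂ) : (vecMulVec v (star v))ᴴ = vecMulVec v (star v) := by
  ext i j
  simp [vecMulVec_apply, conjTranspose_apply, mul_comm]

private lemma vmv_mulVec (a b x : m → ℂ) : vecMulVec a b *ᵥ x = (b ⬝ᵥ x) • a := by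
  ext i
  simp only [mulVec, dotProduct, vecMulVec_apply, Pi.smul_apply, smul_eq_mul,
    Finset.sum_mul]
  exact Finset.sum_congr rfl fun k _ => by ring

private lemma psd_vmv (v : m → ℂ) : (vecMulVec v (star v)).PosSemidef := by
  refine Matrix.PosSemidef.of_dotProduct_mulVec_nonneg (vmv_conjT v) fun x => ?_
  have h2 : star x ⬝ᵥ v = star (star v ⬝ᵥ x) := by
    simp [dotProduct, Finset.sum_comm, mul_comm]
  rw [vmv_mulVec, dotProduct_smul, smul_eq_mul, h2]
  exact mul_star_self_nonneg _

private lemma psd_real_smul {A : Matrix m m ℂ} (hA : A.PosSemidef) {r : ℝ} (hr : 0 ≤ r) :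
    ((r : ℂ) • A).PosSemidef := by
  refine Matrix.PosSemidef.of_dotProduct_mulVec_nonneg ?_ fun x => ?_
  · have h : ((r : ℂ) • A)ᴴ = star (r : ℂ) • Aᴴ := conjTranspose_smul _ _
    rw [Matrix.IsHermitian, h, hA.1.eq, Complex.star_def, Complex.conj_ofReal]
  · rw [smul_mulVec, dotProduct_smul, smul_eq_mul]
    exact mul_nonneg (Complex.zero_le_real.mpr hr) (hA.dotProduct_mulVec_nonneg x)

private lemma psd_kron {I J : Type*} [Fintype I] [Fintype J] [DecidableEq I] [DecidableEq J]
    {A : Matrix I I ℂ} {B : Matrix J J ℂ}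
    (hA : A.PosSemidef) (hB : B.PosSemidef) : (A ⊗ₖ B).PosSemidef := by
  exact hA.kronecker hB

private lemma trace_vmv (a b : m → ℂ) : (vecMulVec a b).trace = b ⬝ᵥ a := by
  simp [Matrix.trace, Matrix.diag, vecMulVec_apply, dotProduct, mul_comm]

private lemma trace_vmv_mul (v : m → ℂ) (B : Matrix m m ℂ) :
    (vecMulVec v (star v) * B).trace = star v ⬝ᵥ (B *ᵥ v) := by
  simp only [Matrix.trace, Matrix.diag, mul_apply, vecMulVec_apply, dotProduct, mulVec,
    Finset.mul_sum]
  rw [Finset.sum_comm]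
  exact Finset.sum_congr rfl fun k _ => Finset.sum_congr rfl fun i _ => by ring

private lemma trB_kron {I J : Type*} [Fintype I] [Fintype J]
    (A : Matrix I I ℂ) (B : Matrix J J ℂ) : trB (A ⊗ₖ B) = B.trace • A := by
  ext i i'
  simp only [trB, Matrix.of_apply, kroneckerMap_apply, Matrix.smul_apply,
    Matrix.trace, Matrix.diag, smul_eq_mul, Finset.sum_mul]
  exact Finset.sum_congr rfl fun j _ => by ring

private lemma trA_kron {I J : Type*} [Fintype I] [Fintype J]
    (A : Matrix I I ℂ) (B : Matrix J J ℂ) : trA (A ⊗ₖ B) = A.trace • B := by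
  ext j j'
  simp only [trA, Matrix.of_apply, kroneckerMap_apply, Matrix.smul_apply,
    Matrix.trace, Matrix.diag, smul_eq_mul, Finset.sum_mul]

private lemma trace_swap_kron (M B : Matrix (Fin 2) (Fin 2) ℂ) :
    ((Matrix.of fun (p q : Fin 2 × Fin 2) => if p.1 = q.2 ∧ p.2 = q.1 then (1 : ℂ) else 0) *
      (M ⊗ₖ B)).trace = (M * B).trace := by
  simp [Matrix.trace, Matrix.diag, mul_apply, Matrix.of_apply, kroneckerMap_apply,
    Fintype.sum_prod_type, Fin.sum_univ_two]
  ring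

end ZenoHelpers

set_option maxHeartbeats 1000000 in
/-- Discrete quantum Zeno effect: the final state of the rotated qubit and the
final state of the repeatedly measured qubit admit a separable coupling whose
quantum-equality weight is at least `ε^n`. -/
theorem zeno_coupling (n : ℕ) (hn : 1 ≤ n) :
    let θ : ℝ := Real.pi / (2 * n)
    let ε : ℝ := (Real.cos θ) ^ 2
    let R : Matrix (Fin 2) (Fin 2) ℂ :=
      !![(Real.cos θ : ℂ), -(Real.sin θ : ℂ); (Real.sin θ : ℂ), (Real.cos θ : ℂ)]
    let e₀ : Fin 2 → ℂ := ![1, 0]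
    let φ : ℕ → Fin 2 → ℂ := fun i => (R ^ i).mulVec e₀
    let Q : ℕ → Matrix (Fin 2) (Fin 2) ℂ := fun i => vecMulVec (φ i) (star (φ i))
    -- state after `i` projective Zeno measurements
    let ρseq : ℕ → Matrix (Fin 2) (Fin 2) ℂ := fun i =>
      Nat.rec (vecMulVec e₀ (star e₀))
        (fun k acc => Q (k + 1) * acc * Q (k + 1) +
          (1 - Q (k + 1)) * acc * (1 - Q (k + 1))) i
    let S : Matrix (Fin 2 × Fin 2) (Fin 2 × Fin 2) ℂ :=
      Matrix.of fun p q => if p.1 = q.2 ∧ p.2 = q.1 then 1 else 0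
    let EqM : Matrix (Fin 2 × Fin 2) (Fin 2 × Fin 2) ℂ := (1 / 2 : ℂ) • (1 + S)
    ∃ ρ' : Matrix (Fin 2 × Fin 2) (Fin 2 × Fin 2) ℂ,
      ρ'.PosSemidef ∧ Separable ρ' ∧
      trB ρ' = vecMulVec (φ n) (star (φ n)) ∧
      trA ρ' = ρseq n ∧
      ε ^ n ≤ (Matrix.trace (EqM * ρ')).re := by
  intro θ ε R e₀ φ Q ρseq S EqM
  -- explicit formula for φ
  have hφ : ∀ i : ℕ, φ i = fun k => (![(Real.cos (i * θ) : ℂ), (Real.sin (i * θ) : ℂ)] k) := by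
    intro i
    induction i with
    | zero =>
      funext k
      show ((R ^ 0) *ᵥ e₀) k = _
      rw [pow_zero, Matrix.one_mulVec]
      fin_cases k <;> simp [e₀]
    | succ k ih =>
      have h1 : φ (k + 1) = R *ᵥ φ k := by
        show (R ^ (k+1)) *ᵥ e₀ = R *ᵥ ((R ^ k) *ᵥ e₀)
        rw [pow_succ', Matrix.mulVec_mulVec]
      have hca : Real.cos ((k + 1 : ℕ) * θ) =
          Real.cos θ * Real.cos (k * θ) - Real.sin θ * Real.sin (k * θ) := by
        rw [show ((k + 1 : ℕ) : ℝ) * θ = θ + k * θ by push_cast; ring, Real.cos_add]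
      have hsa : Real.sin ((k + 1 : ℕ) * θ) =
          Real.sin θ * Real.cos (k * θ) + Real.cos θ * Real.sin (k * θ) := by
        rw [show ((k + 1 : ℕ) : ℝ) * θ = θ + k * θ by push_cast; ring, Real.sin_add]
      rw [h1, ih]
      funext j
      fin_cases j
      · simp [R, Matrix.mulVec, dotProduct, Fin.sum_univ_two, hca, hsa]
        push_cast
        rw [show ((k : ℂ) + 1) * (θ : ℂ) = (k : ℂ) * (θ : ℂ) + (θ : ℂ) by ring,
          Complex.cos_add]
        ring
      · simp [R, Matrix.mulVec, dotProduct, Fin.sum_univ_two, hca, hsa]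
        push_cast
        rw [show ((k : ℂ) + 1) * (θ : ℂ) = (k : ℂ) * (θ : ℂ) + (θ : ℂ) by ring,
          Complex.sin_add]
        ring
  have hdot : ∀ i j : ℕ, star (φ i) ⬝ᵥ φ j = ((Real.cos ((i : ℝ) * θ - (j : ℝ) * θ) : ℝ) : ℂ) := by
    intro i j
    rw [hφ i, hφ j]
    simp only [dotProduct, Fin.sum_univ_two, Pi.star_apply, Matrix.cons_val_zero,
      Matrix.cons_val_one, Matrix.head_cons, RCLike.star_def, Complex.conj_ofReal]
    rw [Real.cos_sub]
    push_cast
    ring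
  have hunit : ∀ i : ℕ, star (φ i) ⬝ᵥ φ i = 1 := by
    intro i
    rw [hdot i i, sub_self, Real.cos_zero, Complex.ofReal_one]
  have hc1 : ∀ i : ℕ, star (φ (i + 1)) ⬝ᵥ φ i = ((Real.cos θ : ℝ) : ℂ) := by
    intro i
    rw [hdot (i + 1) i, show ((i + 1 : ℕ) : ℝ) * θ - (i : ℝ) * θ = θ by push_cast; ring]
  have hc2 : ∀ i : ℕ, star (φ i) ⬝ᵥ φ (i + 1) = ((Real.cos θ : ℝ) : ℂ) := by
    intro i
    rw [hdot i (i + 1), show (i : ℝ) * θ - ((i + 1 : ℕ) : ℝ) * θ = -θ by push_cast; ring,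
      Real.cos_neg]
  -- facts about the projectors Q
  have hQdef : ∀ i : ℕ, Q i = vecMulVec (φ i) (star (φ i)) := fun _ => rfl
  have hQQ : ∀ i : ℕ, Q i * Q i = Q i := by
    intro i
    rw [hQdef, vmv_mul_vmv, hunit, one_smul]
  have hQH : ∀ i : ℕ, (Q i)ᴴ = Q i := fun i => vmv_conjT (φ i)
  have hPH : ∀ i : ℕ, (1 - Q i)ᴴ = 1 - Q i := by
    intro i
    rw [Matrix.conjTranspose_sub, Matrix.conjTranspose_one, hQH]
  have hQmid : ∀ i : ℕ, Q (i + 1) * Q i * Q (i + 1) = ((ε : ℝ) : ℂ) • Q (i + 1) := by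
    intro i
    rw [hQdef, hQdef, vmv_mul_vmv, smul_mul_assoc, vmv_mul_vmv, hc1, hc2, smul_smul]
    congr 1
    show ((Real.cos θ : ℝ) : ℂ) * ((Real.cos θ : ℝ) : ℂ) = (((Real.cos θ) ^ 2 : ℝ) : ℂ)
    push_cast
    ring
  have hρ0 : ρseq 0 = Q 0 := by
    rw [hQdef]
    show vecMulVec e₀ (star e₀) = vecMulVec ((R ^ 0) *ᵥ e₀) (star ((R ^ 0) *ᵥ e₀))
    rw [pow_zero, Matrix.one_mulVec]
  have hstep : ∀ i : ℕ, ρseq (i + 1) = Q (i + 1) * ρseq i * Q (i + 1) +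
      (1 - Q (i + 1)) * ρseq i * (1 - Q (i + 1)) := fun _ => rfl
  have hε0 : (0 : ℝ) ≤ ε := sq_nonneg _
  have hε1 : ε ≤ 1 := Real.cos_sq_le_one θ
  have hSdef : S = Matrix.of fun (p q : Fin 2 × Fin 2) =>
      if p.1 = q.2 ∧ p.2 = q.1 then (1 : ℂ) else 0 := rfl
  have hEqMdef : EqM = (1 / 2 : ℂ) • (1 + S) := rfl
  clear_value EqM S ρseq Q φ e₀ R ε θ
  clear hφ
  -- trace preservation
  have htr : ∀ i : ℕ, (ρseq i).trace = 1 := by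
    intro i
    induction i with
    | zero =>
      rw [hρ0, hQdef, trace_vmv, hunit]
    | succ i ih =>
      have hPP : (1 - Q (i + 1)) * (1 - Q (i + 1)) = 1 - Q (i + 1) := by
        rw [mul_sub, sub_mul, sub_mul, hQQ, one_mul, one_mul, mul_one, sub_self, sub_zero]
      rw [hstep, Matrix.trace_add, Matrix.trace_mul_cycle (Q (i + 1)) (ρseq i) (Q (i + 1)),
        Matrix.trace_mul_cycle (1 - Q (i + 1)) (ρseq i) (1 - Q (i + 1)),
        hQQ, hPP, ← Matrix.trace_add, ← Matrix.add_mul]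
      rw [show Q (i + 1) + (1 - Q (i + 1)) = 1 by abel, Matrix.one_mul, ih]
  -- the Zeno invariant
  have hpsd : ∀ i : ℕ, (ρseq i - ((ε ^ i : ℝ) : ℂ) • Q i).PosSemidef := by
    intro i
    induction i with
    | zero =>
      rw [hρ0]
      simp only [pow_zero, Complex.ofReal_one, one_smul, sub_self]
      exact Matrix.PosSemidef.zero
    | succ i ih =>
      have hρi : (ρseq i).PosSemidef := by
        have h := ih.add (psd_real_smul (psd_vmv (φ i)) (pow_nonneg hε0 i))
        rw [← hQdef i] at h
        simpa using h
      have hkey : ρseq (i + 1) - ((ε ^ (i + 1) : ℝ) : ℂ) • Q (i + 1)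
          = Q (i + 1) * (ρseq i - ((ε ^ i : ℝ) : ℂ) • Q i) * Q (i + 1)
            + (1 - Q (i + 1)) * ρseq i * (1 - Q (i + 1)) := by
        have e1 : Q (i + 1) * (ρseq i - ((ε ^ i : ℝ) : ℂ) • Q i) * Q (i + 1)
            = Q (i + 1) * ρseq i * Q (i + 1)
              - ((ε ^ i : ℝ) : ℂ) • (Q (i + 1) * Q i * Q (i + 1)) := by
          rw [mul_sub, sub_mul, Matrix.mul_smul, Matrix.smul_mul]
        rw [hstep, e1, hQmid, smul_smul]
        rw [show ((ε ^ i : ℝ) : ℂ) * ((ε : ℝ) : ℂ) = ((ε ^ (i + 1) : ℝ) : ℂ) by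
          push_cast; ring]
        abel
      rw [hkey]
      have h1 : (Q (i + 1) * (ρseq i - ((ε ^ i : ℝ) : ℂ) • Q i) * Q (i + 1)).PosSemidef := by
        have := ih.mul_mul_conjTranspose_same (Q (i + 1))
        rwa [hQH] at this
      have h2 : ((1 - Q (i + 1)) * ρseq i * (1 - Q (i + 1))).PosSemidef := by
        have := hρi.mul_mul_conjTranspose_same (1 - Q (i + 1))
        rwa [hPH] at this
      exact h1.add h2
  have hρn : (ρseq n).PosSemidef := by
    have h := (hpsd n).add (psd_real_smul (psd_vmv (φ n)) (pow_nonneg hε0 n))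
    rw [← hQdef n] at h
    simpa using h
  -- the coupling
  refine ⟨vecMulVec (φ n) (star (φ n)) ⊗ₖ ρseq n, ?_, ?_, ?_, ?_, ?_⟩
  · exact psd_kron (psd_vmv (φ n)) hρn
  · exact ⟨1, fun _ => vecMulVec (φ n) (star (φ n)), fun _ => ρseq n,
      fun _ => psd_vmv (φ n), fun _ => hρn, by rw [Fin.sum_univ_one]⟩
  · rw [trB_kron, htr n, one_smul]
  · rw [trA_kron, trace_vmv, hunit, one_smul]
  · -- the trace inequality
    have hz : (0 : ℂ) ≤ star (φ n) ⬝ᵥ ((ρseq n - ((ε ^ n : ℝ) : ℂ) • Q n) *ᵥ φ n) :=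
      (hpsd n).dotProduct_mulVec_nonneg (φ n)
    have hQv : Q n *ᵥ φ n = φ n := by
      rw [hQdef, vmv_mulVec, hunit, one_smul]
    rw [Matrix.sub_mulVec, Matrix.smul_mulVec, hQv, dotProduct_sub,
      dotProduct_smul, hunit, smul_eq_mul, mul_one] at hz
    have hzre : (ε : ℝ) ^ n ≤ (star (φ n) ⬝ᵥ (ρseq n *ᵥ φ n)).re := by
      have := (Complex.le_def.mp hz).1
      simp only [Complex.zero_re, Complex.sub_re, Complex.ofReal_re] at this
      linarith
    have hεn1 : (ε : ℝ) ^ n ≤ 1 := pow_le_one₀ hε0 hε1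
    -- compute the trace
    have hStr : (S * (vecMulVec (φ n) (star (φ n)) ⊗ₖ ρseq n)).trace
        = (vecMulVec (φ n) (star (φ n)) * ρseq n).trace := by
      rw [hSdef]
      exact trace_swap_kron _ _
    have hTtr : ((vecMulVec (φ n) (star (φ n)) ⊗ₖ ρseq n)).trace = 1 := by
      rw [Matrix.trace_kronecker, trace_vmv, hunit, htr n, one_mul]
    have hEq : (EqM * (vecMulVec (φ n) (star (φ n)) ⊗ₖ ρseq n)).trace
        = (1 / 2 : ℂ) * (1 + (vecMulVec (φ n) (star (φ n)) * ρseq n).trace) := by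
      rw [hEqMdef, Matrix.smul_mul, Matrix.trace_smul, Matrix.add_mul, Matrix.one_mul,
        Matrix.trace_add, hTtr, hStr, smul_eq_mul]
    rw [hEq]
    have hAB : (vecMulVec (φ n) (star (φ n)) * ρseq n).trace
        = star (φ n) ⬝ᵥ (ρseq n *ᵥ φ n) := trace_vmv_mul _ _
    rw [hAB]
    rw [show (1 / 2 : ℂ) = ((1 / 2 : ℝ) : ℂ) by norm_num, Complex.re_ofReal_mul,
      Complex.add_re, Complex.one_re]
    linarith
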